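/- Let G ∈ ℝ^{n×n} be symmetric positive definite with λ_min(G) ≥ m > 0, and fix a partition of {1,…,n} into k consecutive blocks of size b (n = bk). Let D be the block-diagonal part of G (the diagonal b×b blocks of G) and let −L be the strictly block-lower-triangular part, so G = D − L − L^T. Then D − L is invertible, and every eigenvalue λ ∈ ℂ of A = L^T (D − L)^{-1} satisfies |λ| ≤ ‖L‖₂ / √(‖L‖₂² + m²). In particular, the spectral radius ρ(A) < 1, and if additionally every entry of G has absolute value at most a constant C₀ (so ‖L‖₂ ≤ C₀ n), then ρ(A) ≤ 1 − c m²/n² for a constant c > 0 depending only on C₀. -/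

import Mathlib

set_option maxHeartbeats 1000000


open Matrix

/-- Spectral (ℓ²-operator) norm of a real matrix. -/
noncomputable def specNorm {m n : Type*} [Fintype m] [Fintype n] [DecidableEq n]
    (A : Matrix m n ℝ) : ℝ :=
  ‖LinearMap.toContinuousLinearMap (Matrix.toEuclideanLin A)‖

section Aux

lemma specNorm_nonneg' {N : ℕ} (L : Matrix (Fin N) (Fin N) ℝ) : 0 ≤ specNorm L :=
  norm_nonneg _

lemma mulVec_sq_le {N : ℕ} (L : Matrix (Fin N) (Fin N) ℝ) (u : Fin N → ℝ) :
    ∑ i, (L *ᵥ u) i ^ 2 ≤ specNorm L ^ 2 * ∑ i, u i ^ 2 := by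
  have h := (LinearMap.toContinuousLinearMap (Matrix.toEuclideanLin L)).le_opNorm
    ((WithLp.equiv 2 (Fin N → ℝ)).symm u)
  have hx : ‖(WithLp.equiv 2 (Fin N → ℝ)).symm u‖ = Real.sqrt (∑ i, u i ^ 2) := by
    rw [EuclideanSpace.norm_eq]
    congr 1; refine Finset.sum_congr rfl fun i _ => ?_; rw [Real.norm_eq_abs, sq_abs]; rfl
  have hy : ‖LinearMap.toContinuousLinearMap (Matrix.toEuclideanLin L)
      ((WithLp.equiv 2 (Fin N → ℝ)).symm u)‖ = Real.sqrt (∑ i, (L *ᵥ u) i ^ 2) := by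
    rw [show (LinearMap.toContinuousLinearMap (Matrix.toEuclideanLin L))
        ((WithLp.equiv 2 (Fin N → ℝ)).symm u)
        = (WithLp.equiv 2 (Fin N → ℝ)).symm (L *ᵥ u) from rfl]
    rw [EuclideanSpace.norm_eq]
    congr 1; refine Finset.sum_congr rfl fun i _ => ?_; rw [Real.norm_eq_abs, sq_abs]; rfl
  rw [hx, hy] at h
  have h1 : (0:ℝ) ≤ ∑ i, (L *ᵥ u) i ^ 2 := Finset.sum_nonneg fun i _ => sq_nonneg _
  have h2 : (0:ℝ) ≤ ∑ i, u i ^ 2 := Finset.sum_nonneg fun i _ => sq_nonneg _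
  have := mul_self_le_mul_self (Real.sqrt_nonneg _) h
  rw [Real.mul_self_sqrt h1] at this
  calc ∑ i, (L *ᵥ u) i ^ 2 ≤ (specNorm L * Real.sqrt (∑ i, u i ^ 2)) *
        (specNorm L * Real.sqrt (∑ i, u i ^ 2)) := this
    _ = specNorm L ^ 2 * ∑ i, u i ^ 2 := by
        rw [mul_mul_mul_comm, Real.mul_self_sqrt h2]; ring

lemma mulVec_map_re {N : ℕ} (P : Matrix (Fin N) (Fin N) ℝ) (z : Fin N → ℂ) (i : Fin N) :
    (((P.map Complex.ofReal) *ᵥ z) i).re = (P *ᵥ fun j => (z j).re) i := by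
  simp [Matrix.mulVec, dotProduct, Complex.re_sum, Complex.mul_re]

lemma mulVec_map_im {N : ℕ} (P : Matrix (Fin N) (Fin N) ℝ) (z : Fin N → ℂ) (i : Fin N) :
    (((P.map Complex.ofReal) *ᵥ z) i).im = (P *ᵥ fun j => (z j).im) i := by
  simp [Matrix.mulVec, dotProduct, Complex.im_sum, Complex.mul_im]

lemma quad_re {N : ℕ} (P : Matrix (Fin N) (Fin N) ℝ) (z : Fin N → ℂ) :
    (star z ⬝ᵥ (P.map Complex.ofReal) *ᵥ z).re
      = (fun j => (z j).re) ⬝ᵥ P *ᵥ (fun j => (z j).re)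
        + (fun j => (z j).im) ⬝ᵥ P *ᵥ (fun j => (z j).im) := by
  have key : ∀ i, ((star z) i * ((P.map Complex.ofReal) *ᵥ z) i).re
      = (z i).re * (P *ᵥ (fun j => (z j).re)) i + (z i).im * (P *ᵥ (fun j => (z j).im)) i := by
    intro i
    rw [Complex.mul_re, mulVec_map_re, mulVec_map_im]
    simp [Pi.star_apply, Complex.conj_re, Complex.conj_im]
  simp only [dotProduct, Complex.re_sum, key, Finset.sum_add_distrib]

lemma quad_conj {N : ℕ} (P : Matrix (Fin N) (Fin N) ℝ) (z : Fin N → ℂ) :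
    star z ⬝ᵥ (Pᵀ.map Complex.ofReal) *ᵥ z
      = (starRingEnd ℂ) (star z ⬝ᵥ (P.map Complex.ofReal) *ᵥ z) := by
  simp only [dotProduct, Matrix.mulVec, map_sum, Finset.mul_sum]
  rw [Finset.sum_comm]
  refine Finset.sum_congr rfl fun i _ => Finset.sum_congr rfl fun j _ => ?_
  simp only [Matrix.transpose_apply, Matrix.map_apply, Pi.star_apply, _root_.map_mul,
    Complex.conj_conj, Complex.conj_ofReal, Complex.star_def]
  ring

lemma sq_abs_sum {N : ℕ} (z : Fin N → ℂ) :
    ∑ i, ‖z i‖ ^ 2 = (∑ i, (z i).re ^ 2) + ∑ i, (z i).im ^ 2 := by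
  rw [← Finset.sum_add_distrib]
  refine Finset.sum_congr rfl fun i _ => ?_
  rw [Complex.sq_norm, Complex.normSq_apply]; ring

lemma abs_quad_le {N : ℕ} (L : Matrix (Fin N) (Fin N) ℝ) (z : Fin N → ℂ) :
    ‖star z ⬝ᵥ (L.map Complex.ofReal) *ᵥ z‖
      ≤ specNorm L * ∑ i, ‖z i‖ ^ 2 := by
  set w := (L.map Complex.ofReal) *ᵥ z with hw
  set s := ∑ i, ‖z i‖ ^ 2 with hs
  have hs0 : 0 ≤ s := Finset.sum_nonneg fun i _ => sq_nonneg _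
  have hwsq : ∑ i, ‖w i‖ ^ 2 ≤ specNorm L ^ 2 * s := by
    have : ∀ i, ‖w i‖ ^ 2 = (L *ᵥ fun j => (z j).re) i ^ 2
        + (L *ᵥ fun j => (z j).im) i ^ 2 := by
      intro i
      rw [Complex.sq_norm, Complex.normSq_apply, ← mulVec_map_re L z i, ← mulVec_map_im L z i]
      ring
    calc ∑ i, ‖w i‖ ^ 2
        = (∑ i, (L *ᵥ fun j => (z j).re) i ^ 2) + ∑ i, (L *ᵥ fun j => (z j).im) i ^ 2 := by
          simp only [this, Finset.sum_add_distrib]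
      _ ≤ specNorm L ^ 2 * (∑ i, (z i).re ^ 2) + specNorm L ^ 2 * (∑ i, (z i).im ^ 2) :=
          add_le_add (mulVec_sq_le L _) (mulVec_sq_le L _)
      _ = specNorm L ^ 2 * s := by rw [hs, sq_abs_sum]; ring
  have habs : ‖star z ⬝ᵥ w‖ ≤ ∑ i, ‖z i‖ * ‖w i‖ := by
    calc ‖star z ⬝ᵥ w‖ ≤ ∑ i, ‖(star z) i * w i‖ :=
        norm_sum_le _ _
      _ = ∑ i, ‖z i‖ * ‖w i‖ := by
        refine Finset.sum_congr rfl fun i _ => ?_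
        simp [norm_mul, Complex.star_def, Complex.norm_conj]
  have hcs : (∑ i, ‖z i‖ * ‖w i‖) ^ 2
      ≤ (∑ i, ‖z i‖ ^ 2) * ∑ i, ‖w i‖ ^ 2 :=
    Finset.sum_mul_sq_le_sq_mul_sq _ _ _
  have hfin : (∑ i, ‖z i‖ * ‖w i‖) ^ 2 ≤ (specNorm L * s) ^ 2 := by
    calc (∑ i, ‖z i‖ * ‖w i‖) ^ 2
        ≤ s * (specNorm L ^ 2 * s) := hcs.trans (by
          exact mul_le_mul_of_nonneg_left hwsq hs0)
      _ = (specNorm L * s) ^ 2 := by ring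
  have h1 : 0 ≤ ∑ i, ‖z i‖ * ‖w i‖ :=
    Finset.sum_nonneg fun i _ => mul_nonneg (norm_nonneg _) (norm_nonneg _)
  have h2 : 0 ≤ specNorm L * s := mul_nonneg (specNorm_nonneg' L) hs0
  have hle : (∑ i, ‖z i‖ * ‖w i‖) ≤ specNorm L * s := by
    nlinarith [hfin, h1, h2]
  exact habs.trans hle

lemma mem_spectrum_exists_eigen {N : ℕ} (M : Matrix (Fin N) (Fin N) ℂ) {μ : ℂ}
    (h : μ ∈ spectrum ℂ M) : ∃ z : Fin N → ℂ, z ≠ 0 ∧ M *ᵥ z = μ • z := by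
  rw [← AlgEquiv.spectrum_eq (Matrix.toLinAlgEquiv' (R := ℂ) (n := Fin N)) M] at h
  have hev : Module.End.HasEigenvalue (Matrix.toLinAlgEquiv' M) μ :=
    Module.End.hasEigenvalue_iff_mem_spectrum.mpr h
  obtain ⟨v, hv⟩ := hev.exists_hasEigenvector
  exact ⟨v, hv.2, by simpa [Matrix.toLinAlgEquiv'_apply, Matrix.toLin'_apply] using hv.apply_eq_smul⟩

lemma eig_bound (l m s a q lab : ℝ) (hl : 0 ≤ l) (hm : 0 < m) (hs : 0 < s)
    (ha0 : 0 ≤ a) (ha : a ≤ l * s) (hq0 : 0 < q) (hq : a^2 + m^2*s^2 ≤ q^2)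
    (hlab : 0 ≤ lab) (heq : a = lab * q) :
    lab ≤ l / Real.sqrt (l^2 + m^2) := by
  have hX : (0:ℝ) < l^2 + m^2 := by positivity
  have hS : 0 < Real.sqrt (l^2 + m^2) := Real.sqrt_pos.mpr hX
  have hS2 : Real.sqrt (l^2+m^2) ^ 2 = l^2 + m^2 := Real.sq_sqrt hX.le
  rw [le_div_iff₀ hS]
  have h1 : lab^2 * q^2 = a^2 := by rw [heq]; ring
  have ha2 : a^2 ≤ l^2 * s^2 := by nlinarith
  have h3 : a^2 * (l^2+m^2) ≤ l^2 * q^2 := by nlinarith [sq_nonneg a, sq_nonneg m]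
  have h4 : lab^2 * (l^2+m^2) * q^2 ≤ l^2 * q^2 := by nlinarith
  have hkey : lab^2 * (l^2 + m^2) ≤ l^2 :=
    le_of_mul_le_mul_right h4 (pow_pos hq0 2)
  have h2 : (lab * Real.sqrt (l^2+m^2))^2 ≤ l^2 := by
    rw [mul_pow, hS2]; exact hkey
  exact le_of_pow_le_pow_left₀ two_ne_zero hl h2

lemma ratio_lt_one (l m : ℝ) (hl : 0 ≤ l) (hm : 0 < m) :
    l / Real.sqrt (l^2 + m^2) < 1 := by
  have hX : (0:ℝ) < l^2 + m^2 := by positivity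
  have hS : 0 < Real.sqrt (l^2 + m^2) := Real.sqrt_pos.mpr hX
  rw [div_lt_one hS]
  have : l = Real.sqrt (l^2) := by rw [Real.sqrt_sq hl]
  rw [this]
  exact Real.sqrt_lt_sqrt (by positivity) (by nlinarith)

lemma ratio_le_final (l m C n : ℝ) (hl : 0 ≤ l) (hm : 0 < m) (hC : 0 < C) (hn : 1 ≤ n)
    (h1 : l ≤ C * n) (h2 : m ≤ C) :
    l / Real.sqrt (l^2 + m^2) ≤ 1 - (1/(4*C^2)) * m^2 / n^2 := by
  set X := l^2 + m^2 with hXdef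
  have hX : (0:ℝ) < X := by positivity
  set S := Real.sqrt X with hSdef
  have hS : 0 < S := Real.sqrt_pos.mpr hX
  have hS2 : S ^ 2 = X := Real.sq_sqrt hX.le
  have hn0 : 0 < n := lt_of_lt_of_le one_pos hn
  have hS3 : S^3 = X*S := by rw [pow_succ, hS2]
  have hS2l : S^2*l = X*l := by rw [hS2]
  have hkey : 2*X*l + m^2*S ≤ 2*X*S := by
    rw [hXdef] at hS3 hS2l ⊢
    nlinarith [mul_nonneg hS.le (sq_nonneg (S - l)), hS3, hS2l]
  have step1 : l / S ≤ 1 - m^2 / (2*X) := by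
    rw [div_le_iff₀ hS, sub_mul, one_mul, le_sub_iff_add_le, div_mul_eq_mul_div]
    calc l + m^2*S/(2*X) = (2*X*l + m^2*S)/(2*X) := by field_simp
      _ ≤ (2*X*S)/(2*X) := by gcongr
      _ = S := by field_simp
  have step2 : (1/(4*C^2)) * m^2 / n^2 ≤ m^2 / (2*X) := by
    rw [one_div, inv_mul_eq_div, div_div, div_le_div_iff₀ (by positivity) (by positivity)]
    have h1sq : l^2 ≤ C^2*n^2 := by nlinarith
    have h2sq : m^2 ≤ C^2 := by nlinarith
    have hnsq : (1:ℝ) ≤ n^2 := by nlinarith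
    have e1 := mul_le_mul_of_nonneg_left h1sq (sq_nonneg m)
    have e2 := mul_le_mul_of_nonneg_left h2sq (sq_nonneg m)
    have e3 := mul_le_mul_of_nonneg_left hnsq (mul_nonneg (sq_nonneg m) (sq_nonneg C))
    rw [hXdef]; nlinarith [e1, e2, e3]
  linarith

def blockPart (b t : ℕ) {n : ℕ} (v : Fin n → ℝ) : Fin n → ℝ :=
  fun i => if (i : ℕ) / b = t then v i else 0

lemma blockPart_apply (b t : ℕ) {n : ℕ} (v : Fin n → ℝ) (i : Fin n) :
    blockPart b t v i = if (i : ℕ) / b = t then v i else 0 := rfl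

lemma div_lt_k {n b k : ℕ} (hn : n = b * k) (i : Fin n) : (i : ℕ) / b < k :=
  Nat.div_lt_of_lt_mul (by rw [← hn]; exact i.isLt)

lemma Dpos {n b k : ℕ} (hn : n = b * k) (G : Matrix (Fin n) (Fin n) ℝ) (m : ℝ)
    (hpd : ∀ v : Fin n → ℝ, m * ∑ i, v i ^ 2 ≤ v ⬝ᵥ G.mulVec v)
    (v : Fin n → ℝ) :
    m * ∑ i, v i ^ 2 ≤ v ⬝ᵥ (Matrix.of (fun (i j : Fin n) =>
      if (i : ℕ) / b = (j : ℕ) / b then G i j else 0)) *ᵥ v := by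
  have hpt : ∀ (i j : Fin n), v i * ((if (i : ℕ) / b = (j : ℕ) / b then G i j else 0) * v j)
      = ∑ t ∈ Finset.range k, blockPart b t v i * (G i j * blockPart b t v j) := by
    intro i j
    rw [Finset.sum_eq_single ((i:ℕ)/b)]
    · rw [blockPart_apply, blockPart_apply, if_pos rfl]
      by_cases h : (i:ℕ)/b = (j:ℕ)/b
      · rw [if_pos h, if_pos h.symm]
      · rw [if_neg h, if_neg (fun hc => h hc.symm)]; ring
    · intro t _ ht
      rw [blockPart_apply, if_neg (fun hc => ht hc.symm)]
      ring
    · intro h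
      exact absurd (Finset.mem_range.mpr (div_lt_k hn i)) h
  have hA : v ⬝ᵥ (Matrix.of (fun (i j : Fin n) =>
        if (i : ℕ) / b = (j : ℕ) / b then G i j else 0)) *ᵥ v
      = ∑ t ∈ Finset.range k, (blockPart b t v) ⬝ᵥ G *ᵥ (blockPart b t v) := by
    calc v ⬝ᵥ (Matrix.of (fun (i j : Fin n) =>
          if (i : ℕ) / b = (j : ℕ) / b then G i j else 0)) *ᵥ v
        = ∑ x : Fin n, ∑ y : Fin n, v x * ((if (x : ℕ) / b = (y : ℕ) / b then G x y else 0) * v y) := by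
          simp only [dotProduct, Matrix.mulVec, Finset.mul_sum, Matrix.of_apply]
      _ = ∑ x : Fin n, ∑ y : Fin n, ∑ t ∈ Finset.range k,
            blockPart b t v x * (G x y * blockPart b t v y) :=
          Finset.sum_congr rfl fun x _ => Finset.sum_congr rfl fun y _ => hpt x y
      _ = ∑ x : Fin n, ∑ t ∈ Finset.range k, ∑ y : Fin n,
            blockPart b t v x * (G x y * blockPart b t v y) :=
          Finset.sum_congr rfl fun x _ => Finset.sum_comm
      _ = ∑ t ∈ Finset.range k, ∑ x : Fin n, ∑ y : Fin n,
            blockPart b t v x * (G x y * blockPart b t v y) := Finset.sum_comm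
      _ = ∑ t ∈ Finset.range k, (blockPart b t v) ⬝ᵥ G *ᵥ (blockPart b t v) := by
          simp only [dotProduct, Matrix.mulVec, Finset.mul_sum]
  have hB : ∑ i, v i ^ 2 = ∑ t ∈ Finset.range k, ∑ i, (blockPart b t v i) ^ 2 := by
    rw [Finset.sum_comm]
    refine Finset.sum_congr rfl fun i _ => ?_
    rw [Finset.sum_eq_single ((i:ℕ)/b)]
    · rw [blockPart_apply, if_pos rfl]
    · intro t _ ht
      rw [blockPart_apply, if_neg (fun hc => ht hc.symm)]
      exact zero_pow two_ne_zero
    · intro h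
      exact absurd (Finset.mem_range.mpr (div_lt_k hn i)) h
  calc m * ∑ i, v i ^ 2 = ∑ t ∈ Finset.range k, m * ∑ i, (blockPart b t v i) ^ 2 := by
        rw [hB, Finset.mul_sum]
    _ ≤ ∑ t ∈ Finset.range k, (blockPart b t v) ⬝ᵥ G *ᵥ (blockPart b t v) :=
        Finset.sum_le_sum fun t _ => hpd (blockPart b t v)
    _ = _ := hA.symm

lemma map_inv_comm {N : ℕ} (M : Matrix (Fin N) (Fin N) ℝ) (h : IsUnit M.det) :
    (M⁻¹).map Complex.ofReal = (M.map Complex.ofReal)⁻¹ := by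
  have h1 : (M.map Complex.ofReal) * ((M⁻¹).map Complex.ofReal) = 1 := by
    rw [show (Complex.ofReal : ℝ → ℂ) = ⇑Complex.ofRealHom from rfl, ← Matrix.map_mul,
      Matrix.mul_nonsing_inv M h]
    exact Matrix.map_one _ (map_zero _) (map_one _)
  exact (Matrix.inv_eq_right_inv h1).symm

end Aux

theorem gauss_seidel_spectral_radius (C₀ : ℝ) (hC₀ : 0 < C₀) :
    ∃ c : ℝ, 0 < c ∧
      ∀ (n b k : ℕ), n = b * k → 0 < b →
      ∀ (G : Matrix (Fin n) (Fin n) ℝ) (m : ℝ), 0 < m → G.IsSymm →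
      (∀ v : Fin n → ℝ, m * ∑ i, v i ^ 2 ≤ v ⬝ᵥ G.mulVec v) →
      ∀ D L : Matrix (Fin n) (Fin n) ℝ,
        D = Matrix.of (fun (i j : Fin n) => if (i : ℕ) / b = (j : ℕ) / b then G i j else 0) →
        L = Matrix.of (fun (i j : Fin n) => if (j : ℕ) / b < (i : ℕ) / b then -(G i j) else 0) →
        IsUnit (D - L) ∧
        (∀ lam ∈ spectrum ℂ ((Lᵀ * (D - L)⁻¹).map Complex.ofReal),
          ‖lam‖ ≤ specNorm L / Real.sqrt (specNorm L ^ 2 + m ^ 2) ∧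
          ‖lam‖ < 1) ∧
        ((∀ i j, |G i j| ≤ C₀) →
          ∀ lam ∈ spectrum ℂ ((Lᵀ * (D - L)⁻¹).map Complex.ofReal),
            ‖lam‖ ≤ 1 - c * m ^ 2 / (n : ℝ) ^ 2) := by
  refine ⟨1/(4*C₀^2), by positivity, ?_⟩
  intro n b k hn hb G m hm hsym hpd D L hD hL
  have hDpos : ∀ v : Fin n → ℝ, m * ∑ i, v i ^ 2 ≤ v ⬝ᵥ D *ᵥ v := by
    intro v; rw [hD]; exact Dpos hn G m hpd v
  -- G = D - L - Lᵀ
  have heq : D - L - Lᵀ = G := by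
    ext i j
    have hGs : G j i = G i j := hsym.apply i j
    simp only [Matrix.sub_apply, Matrix.transpose_apply, hD, hL, Matrix.of_apply]
    rcases lt_trichotomy ((i:ℕ)/b) ((j:ℕ)/b) with h | h | h
    · rw [if_neg (fun hc => absurd hc (ne_of_lt h)), if_neg (not_lt_of_gt h), if_pos h, hGs]
      ring
    · rw [if_pos h, if_neg (fun hc => absurd h (ne_of_gt hc)), if_neg (fun hc => absurd h (ne_of_lt hc))]
      ring
    · rw [if_neg (fun hc => absurd hc (ne_of_gt h)), if_pos h, if_neg (not_lt_of_gt h)]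
      ring
  -- invertibility of D - L
  have hdet : (D - L).det ≠ 0 := by
    intro hdet
    obtain ⟨x, hx0, hx⟩ := (Matrix.exists_mulVec_eq_zero_iff).mpr hdet
    have h1 : x ⬝ᵥ (D - L) *ᵥ x = 0 := by rw [hx, dotProduct_zero]
    have hLT : x ⬝ᵥ Lᵀ *ᵥ x = x ⬝ᵥ L *ᵥ x := by
      rw [Matrix.dotProduct_mulVec, Matrix.vecMul_transpose, dotProduct_comm]
    have h2 : x ⬝ᵥ G *ᵥ x = - (x ⬝ᵥ D *ᵥ x) := by
      rw [← heq]
      rw [Matrix.sub_mulVec, Matrix.sub_mulVec, dotProduct_sub, dotProduct_sub, hLT]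
      rw [Matrix.sub_mulVec, dotProduct_sub] at h1
      linarith
    have hG := hpd x
    have hDx := hDpos x
    obtain ⟨i0, hi0⟩ := Function.ne_iff.mp hx0
    have hpos : 0 < ∑ i, x i ^ 2 := by
      have hge : x i0 ^ 2 ≤ ∑ i, x i ^ 2 :=
        Finset.single_le_sum (fun i _ => sq_nonneg (x i)) (Finset.mem_univ i0)
      have hne : x i0 ≠ 0 := hi0
      have : 0 < x i0 ^ 2 := by positivity
      linarith
    nlinarith
  have hunit : IsUnit (D - L) := by
    rw [Matrix.isUnit_iff_isUnit_det]
    exact isUnit_iff_ne_zero.mpr hdet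
  -- complex setup
  set Mc := (D - L).map Complex.ofReal with hMc
  have hdetc : IsUnit Mc.det := by
    have hdm : Mc.det = Complex.ofReal ((D - L).det) := by
      rw [hMc, show (Complex.ofReal : ℝ → ℂ) = ⇑Complex.ofRealHom from rfl,
        ← RingHom.mapMatrix_apply, ← RingHom.map_det]
    rw [hdm, isUnit_iff_ne_zero]
    exact Complex.ofReal_ne_zero.mpr hdet
  have hmain : ∀ lam ∈ spectrum ℂ ((Lᵀ * (D - L)⁻¹).map Complex.ofReal),
      ‖lam‖ ≤ specNorm L / Real.sqrt (specNorm L ^ 2 + m ^ 2) := by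
    intro lam hl
    obtain ⟨y, hy0, hy⟩ := mem_spectrum_exists_eigen _ hl
    have hAc : (Lᵀ * (D - L)⁻¹).map Complex.ofReal = (Lᵀ.map Complex.ofReal) * Mc⁻¹ := by
      rw [show (Complex.ofReal : ℝ → ℂ) = ⇑Complex.ofRealHom from rfl, Matrix.map_mul]
      rw [show ⇑Complex.ofRealHom = (Complex.ofReal : ℝ → ℂ) from rfl]
      rw [map_inv_comm _ (Matrix.isUnit_iff_isUnit_det (D - L) |>.mp hunit)]
    set z := Mc⁻¹ *ᵥ y with hz
    have hz_My : Mc *ᵥ z = y := by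
      rw [hz, Matrix.mulVec_mulVec, Matrix.mul_nonsing_inv _ hdetc, Matrix.one_mulVec]
    have hz0 : z ≠ 0 := by
      intro h
      apply hy0
      rw [← hz_My, h, Matrix.mulVec_zero]
    have heig : (Lᵀ.map Complex.ofReal) *ᵥ z = lam • (Mc *ᵥ z) := by
      rw [hz_My]
      have : ((Lᵀ * (D - L)⁻¹).map Complex.ofReal) *ᵥ y = lam • y := hy
      rw [hAc, ← Matrix.mulVec_mulVec] at this
      exact this
    -- quadratic forms
    set α := star z ⬝ᵥ (L.map Complex.ofReal) *ᵥ z with hα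
    set d := star z ⬝ᵥ (D.map Complex.ofReal) *ᵥ z with hd
    set s := ∑ i, ‖z i‖ ^ 2 with hs
    have hs_pos : 0 < s := by
      obtain ⟨i0, hi0⟩ := Function.ne_iff.mp hz0
      have hge : ‖z i0‖ ^ 2 ≤ s :=
        Finset.single_le_sum (f := fun i => ‖z i‖ ^ 2)
          (fun i _ => sq_nonneg _) (Finset.mem_univ i0)
      have : 0 < ‖z i0‖ ^ 2 := by
        have : ‖z i0‖ ≠ 0 := by simpa using hi0
        positivity
      linarith
    -- Mc decomposition
    have hMc_sub : Mc = D.map Complex.ofReal - L.map Complex.ofReal := by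
      rw [hMc]
      exact Matrix.map_sub _ (by simp) D L
    have hdot_M : star z ⬝ᵥ Mc *ᵥ z = d - α := by
      rw [hMc_sub, Matrix.sub_mulVec, dotProduct_sub]
    have key : (starRingEnd ℂ) α = lam * (d - α) := by
      have := congrArg (fun w => star z ⬝ᵥ w) heig
      rw [quad_conj L z] at this
      rw [this, dotProduct_smul, hdot_M]
      rfl
    -- d is real, with re ≥ m s
    have hDsymm : Dᵀ = D := by
      ext i j
      simp only [Matrix.transpose_apply, hD, Matrix.of_apply]
      by_cases h : (j:ℕ)/b = (i:ℕ)/b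
      · rw [if_pos h, if_pos h.symm, hsym.apply i j]
      · rw [if_neg h, if_neg (fun hc => h hc.symm)]
    have hd_conj : (starRingEnd ℂ) d = d := by
      conv_rhs => rw [hd, ← hDsymm]
      rw [quad_conj D z]
    have hd_im : d.im = 0 := by
      have := congrArg Complex.im hd_conj
      simp only [Complex.conj_im] at this
      linarith
    have hquad : ∀ (P : Matrix (Fin n) (Fin n) ℝ),
        (∀ v : Fin n → ℝ, m * ∑ i, v i ^ 2 ≤ v ⬝ᵥ P *ᵥ v) →
        m * s ≤ (star z ⬝ᵥ (P.map Complex.ofReal) *ᵥ z).re := by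
      intro P hP
      rw [quad_re P z, hs, sq_abs_sum]
      have h1 := hP (fun j => (z j).re)
      have h2 := hP (fun j => (z j).im)
      linarith [h1, h2]
    have hd_re : m * s ≤ d.re := hquad D hDpos
    -- G quadratic form
    have hG_map : G.map Complex.ofReal
        = D.map Complex.ofReal - L.map Complex.ofReal - Lᵀ.map Complex.ofReal := by
      rw [← heq, Matrix.map_sub _ (by simp), Matrix.map_sub _ (by simp)]
    have hG_re : m * s ≤ d.re - 2 * α.re := by
      have h0 := hquad G hpd
      rw [hG_map, Matrix.sub_mulVec, dotProduct_sub, Matrix.sub_mulVec,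
        dotProduct_sub, quad_conj L z] at h0
      simp only [Complex.sub_re, Complex.conj_re] at h0
      rw [← hd, ← hα] at h0
      linarith [h0]
    -- bounds
    have hα_bound : ‖α‖ ≤ specNorm L * s := abs_quad_le L z
    have hq_sq : ‖α‖ ^ 2 + m^2 * s^2 ≤ ‖d - α‖ ^ 2 := by
      rw [Complex.sq_norm, Complex.sq_norm, Complex.normSq_apply, Complex.normSq_apply]
      simp only [Complex.sub_re, Complex.sub_im, hd_im, zero_sub]
      have hprod : (m*s) * (m*s) ≤ d.re * (d.re - 2*α.re) :=
        mul_le_mul hd_re hG_re (by positivity) (by linarith [mul_pos hm hs_pos])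
      nlinarith [hprod]
    have hq_pos : 0 < ‖d - α‖ := by
      have h1 : 0 < m^2 * s^2 := mul_pos (pow_pos hm 2) (pow_pos hs_pos 2)
      have h2 : 0 ≤ ‖α‖ ^ 2 := sq_nonneg _
      have h3 : 0 < ‖d - α‖ ^ 2 := by linarith
      nlinarith [norm_nonneg (d - α), h3]
    have habs_eq : ‖α‖ = ‖lam‖ * ‖d - α‖ := by
      have := congrArg norm key
      rwa [norm_mul, Complex.norm_conj] at this
    exact eig_bound (specNorm L) m s (‖α‖) (‖d - α‖) (‖lam‖)
      (specNorm_nonneg' L) hm hs_pos (norm_nonneg _) hα_bound hq_pos hq_sq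
      (norm_nonneg _) habs_eq
  refine ⟨hunit, fun lam hl => ⟨hmain lam hl,
    (hmain lam hl).trans_lt (ratio_lt_one _ _ (specNorm_nonneg' L) hm)⟩, ?_⟩
  -- part 3
  intro hbound lam hl
  obtain ⟨z0, hz00, _⟩ := mem_spectrum_exists_eigen _ hl
  have hn0 : n ≠ 0 := by
    rintro rfl
    exact hz00 (funext fun i => i.elim0)
  have hn1 : (1:ℝ) ≤ (n:ℝ) := by
    exact_mod_cast Nat.one_le_iff_ne_zero.mpr hn0
  -- |L i j| ≤ C₀
  have hLij : ∀ i j, |L i j| ≤ C₀ := by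
    intro i j
    rw [hL]
    simp only [Matrix.of_apply]
    by_cases h : (j:ℕ)/b < (i:ℕ)/b
    · rw [if_pos h, abs_neg]; exact hbound i j
    · rw [if_neg h, abs_zero]; exact hC₀.le
  -- specNorm L ≤ C₀ * n
  have hL_le : specNorm L ≤ C₀ * n := by
    apply ContinuousLinearMap.opNorm_le_bound _ (by positivity)
    intro x
    rw [show (LinearMap.toContinuousLinearMap (Matrix.toEuclideanLin L)) x
        = (WithLp.equiv 2 (Fin n → ℝ)).symm (L *ᵥ (WithLp.equiv 2 (Fin n → ℝ)) x) from rfl]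
    rw [EuclideanSpace.norm_eq, EuclideanSpace.norm_eq]
    set u : Fin n → ℝ := (WithLp.equiv 2 (Fin n → ℝ)) x with hu
    have hterm : ∀ i : Fin n, ‖((WithLp.equiv 2 (Fin n → ℝ)).symm (L *ᵥ u) : EuclideanSpace ℝ (Fin n)) i‖^2
        = ((L *ᵥ u) i)^2 := by
      intro i; rw [Real.norm_eq_abs, sq_abs]; rfl
    have hterm2 : ∀ i : Fin n, ‖(x : EuclideanSpace ℝ (Fin n)) i‖^2 = (u i)^2 := by
      intro i; rw [Real.norm_eq_abs, sq_abs]; rfl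
    simp only [hterm, hterm2]
    have hmain2 : ∑ i, ((L *ᵥ u) i)^2 ≤ (C₀ * n)^2 * ∑ i, (u i)^2 := by
      have hrow : ∀ i : Fin n, ((L *ᵥ u) i)^2 ≤ ((n:ℝ) * C₀^2) * ∑ j, (u j)^2 := by
        intro i
        have hcs : (∑ j, L i j * u j)^2 ≤ (∑ j, (L i j)^2) * ∑ j, (u j)^2 :=
          Finset.sum_mul_sq_le_sq_mul_sq _ _ _
        have hLsum : ∑ j, (L i j)^2 ≤ (n:ℝ) * C₀^2 := by
          calc ∑ j, (L i j)^2 ≤ ∑ _j : Fin n, C₀^2 := by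
                refine Finset.sum_le_sum fun j _ => ?_
                rw [← sq_abs]
                exact pow_le_pow_left₀ (abs_nonneg _) (hLij i j) 2
            _ = (n:ℝ) * C₀^2 := by simp [mul_comm]
        calc ((L *ᵥ u) i)^2 = (∑ j, L i j * u j)^2 := rfl
          _ ≤ (∑ j, (L i j)^2) * ∑ j, (u j)^2 := hcs
          _ ≤ ((n:ℝ) * C₀^2) * ∑ j, (u j)^2 := by
              apply mul_le_mul_of_nonneg_right hLsum
              exact Finset.sum_nonneg fun j _ => sq_nonneg _
      calc ∑ i, ((L *ᵥ u) i)^2 ≤ ∑ _i : Fin n, ((n:ℝ) * C₀^2) * ∑ j, (u j)^2 :=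
            Finset.sum_le_sum fun i _ => hrow i
        _ = (n:ℝ) * (((n:ℝ) * C₀^2) * ∑ j, (u j)^2) := by simp [mul_comm]
        _ = (C₀ * n)^2 * ∑ i, (u i)^2 := by ring
    calc Real.sqrt (∑ i, ((L *ᵥ u) i)^2) ≤ Real.sqrt ((C₀ * n)^2 * ∑ i, (u i)^2) :=
          Real.sqrt_le_sqrt hmain2
      _ = (C₀ * n) * Real.sqrt (∑ i, (u i)^2) := by
          rw [Real.sqrt_mul (sq_nonneg _), Real.sqrt_sq (by positivity)]
  -- m ≤ C₀
  have hmC : m ≤ C₀ := by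
    have hnpos : 0 < n := Nat.pos_of_ne_zero hn0
    set i0 : Fin n := ⟨0, hnpos⟩ with hi0
    set e : Fin n → ℝ := fun j => if j = i0 then 1 else 0 with he
    have h1 : ∑ i, e i ^ 2 = 1 := by
      rw [he]
      simp [apply_ite (fun t : ℝ => t^2)]
    have h2 : e ⬝ᵥ G *ᵥ e = G i0 i0 := by
      rw [he]
      simp [dotProduct, Matrix.mulVec, ite_mul, Finset.mul_sum, mul_ite]
    have := hpd e
    rw [h1, h2, mul_one] at this
    calc m ≤ G i0 i0 := this
      _ ≤ |G i0 i0| := le_abs_self _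
      _ ≤ C₀ := hbound i0 i0
  calc ‖lam‖ ≤ specNorm L / Real.sqrt (specNorm L ^ 2 + m ^ 2) := hmain lam hl
    _ ≤ 1 - (1/(4*C₀^2)) * m^2 / (n:ℝ)^2 :=
        ratio_le_final _ _ _ _ (specNorm_nonneg' L) hm hC₀ hn1 hL_le hmC
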